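/- Let n be a positive integer, δ ∈ {0, 1}, and β ∈ ℂ with |β| ≥ (R₀ + ω₀^δ)(1 + e²)^{3n/2}/(√2 e)^n. If p ∈ ℋ satisfies (p(z))^δ + β (z p′(z))^n ≺ 𝔅(z), then p(z) ≺ 𝔅(z). -/

import Mathlib

open Complex

noncomputable section

/-- The open unit disk in the complex plane. -/
def unitDisk : Set ℂ := Metric.ball 0 1

/-- `f` is subordinate to `g` on the unit disk: there is an analytic Schwarz function `w`
with `w 0 = 0`, `|w z| < 1` on the disk, and `f = g ∘ w` on the disk. -/
def Subord (f g : ℂ → ℂ) : Prop :=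
  ∃ w : ℂ → ℂ, DifferentiableOn ℂ w unitDisk ∧ w 0 = 0 ∧
    (∀ z ∈ unitDisk, ‖w z‖ < 1) ∧ ∀ z ∈ unitDisk, f z = g (w z)

/-- The function `𝔅(z) = √(1 + tanh z)` (principal branch). -/
def bean (z : ℂ) : ℂ := (1 + Complex.tanh z) ^ ((1 : ℂ) / 2)

/-- `R₀ = e √(2/(e² - 1))`. -/
def R₀ : ℝ := Real.exp 1 * Real.sqrt (2 / (Real.exp 1 ^ 2 - 1))

/-- `ω₀ = max_{θ ∈ [0, 2π)} |𝔅(e^{iθ})|`. -/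
def ω₀ : ℝ :=
  sSup ((fun θ : ℝ => ‖bean (Complex.exp (θ * Complex.I))‖) '' Set.Ico 0 (2 * Real.pi))

lemma isOpen_unitDisk : IsOpen unitDisk := Metric.isOpen_ball


lemma sq_abs_sinh (x y : ℝ) :
    ‖Complex.sinh (x + y * I)‖ ^ 2 = Real.sinh x ^ 2 + Real.sin y ^ 2 := by
  have h : Complex.sinh ((x:ℂ) + y * I)
      = (↑(Real.sinh x * Real.cos y) + ↑(Real.cosh x * Real.sin y) * I) := by
    rw [Complex.sinh_add, Complex.cosh_mul_I, Complex.sinh_mul_I,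
      ← Complex.ofReal_sinh, ← Complex.ofReal_cosh, ← Complex.ofReal_cos, ← Complex.ofReal_sin]
    push_cast; ring
  rw [Complex.sq_norm, h, Complex.normSq_add_mul_I]
  nlinarith [Real.sin_sq_add_cos_sq y, Real.cosh_sq x]

lemma sq_abs_cosh (x y : ℝ) :
    ‖Complex.cosh (x + y * I)‖ ^ 2 = Real.sinh x ^ 2 + Real.cos y ^ 2 := by
  have h : Complex.cosh ((x:ℂ) + y * I)
      = (↑(Real.cosh x * Real.cos y) + ↑(Real.sinh x * Real.sin y) * I) := by
    rw [Complex.cosh_add, Complex.cosh_mul_I, Complex.sinh_mul_I,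
      ← Complex.ofReal_sinh, ← Complex.ofReal_cosh, ← Complex.ofReal_cos, ← Complex.ofReal_sin]
    push_cast; ring
  rw [Complex.sq_norm, h, Complex.normSq_add_mul_I]
  nlinarith [Real.sin_sq_add_cos_sq y, Real.cosh_sq x]

lemma abs_tanh_le {z : ℂ} (h : |z.im| ≤ 1) : ‖Complex.tanh z‖ ≤ 2 := by
  have hzz : (z.re : ℂ) + (z.im : ℂ) * I = z := Complex.re_add_im z
  have hs := sq_abs_sinh z.re z.im
  have hc2 := sq_abs_cosh z.re z.im
  rw [hzz] at hs hc2
  have hcos : (1:ℝ)/2 ≤ Real.cos z.im := by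
    have h2 := Real.one_sub_sq_div_two_le_cos (x := z.im)
    have h3 : z.im ^ 2 ≤ 1 := by nlinarith [abs_le.mp h, abs_nonneg z.im, _root_.sq_abs z.im]
    linarith
  have hc : 0 < ‖Complex.cosh z‖ := by
    nlinarith [norm_nonneg (Complex.cosh z), sq_nonneg (Real.sinh z.re)]
  have h1 : ‖Complex.sinh z‖ ^ 2 ≤ (2 * ‖Complex.cosh z‖) ^ 2 := by
    rw [hs]
    nlinarith [Real.sin_sq_add_cos_sq z.im, sq_nonneg (Real.sinh z.re)]
  have h4 : ‖Complex.sinh z‖ ≤ 2 * ‖Complex.cosh z‖ := by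
    nlinarith [norm_nonneg (Complex.sinh z)]
  rw [Complex.tanh_eq_sinh_div_cosh, norm_div, div_le_iff₀ hc]
  linarith

lemma abs_cpow_half (w : ℂ) :
    ‖w ^ ((1 : ℂ) / 2)‖ = ‖w‖ ^ ((1:ℝ) / 2) := by
  rcases eq_or_ne w 0 with rfl | h0
  · rw [Complex.zero_cpow (by norm_num)]
    simp only [norm_zero]
    rw [Real.zero_rpow (by norm_num)]
  · rw [Complex.norm_cpow_of_ne_zero h0]
    norm_num

lemma abs_bean_le {z : ℂ} (h : |z.im| ≤ 1) : ‖bean z‖ ≤ Real.sqrt 3 := by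
  unfold bean
  rw [abs_cpow_half]
  have habs : ‖1 + Complex.tanh z‖ ≤ 3 := by
    calc ‖1 + Complex.tanh z‖ ≤ 1 + ‖Complex.tanh z‖ := by
          simpa using norm_add_le 1 (Complex.tanh z)
      _ ≤ 3 := by linarith [abs_tanh_le h]
  calc ‖1 + Complex.tanh z‖ ^ ((1:ℝ)/2) ≤ (3:ℝ) ^ ((1:ℝ)/2:ℝ) :=
        Real.rpow_le_rpow (norm_nonneg _) habs (by norm_num)
    _ = Real.sqrt 3 := by rw [Real.sqrt_eq_rpow]

lemma R0_ge : (1.5205 : ℝ) ≤ R₀ := by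
  have he1 : (2.7182818283 : ℝ) < Real.exp 1 := Real.exp_one_gt_d9
  have he2 : Real.exp 1 < 2.7182818286 := Real.exp_one_lt_d9
  have harg : (0.31303 : ℝ) ≤ 2 / (Real.exp 1 ^ 2 - 1) := by
    rw [le_div_iff₀ (by nlinarith)]
    nlinarith
  have h1 : (0.5594 : ℝ) ≤ Real.sqrt (2 / (Real.exp 1 ^ 2 - 1)) := by
    have := Real.sqrt_le_sqrt harg
    have h2 : (0.5594 : ℝ) ≤ Real.sqrt 0.31303 := by
      rw [show (0.31303:ℝ) = 0.31303 from rfl]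
      nlinarith [Real.sq_sqrt (show (0:ℝ) ≤ 0.31303 by norm_num),
        Real.sqrt_nonneg (0.31303:ℝ)]
    linarith
  unfold R₀
  nlinarith [Real.sqrt_nonneg (2 / (Real.exp 1 ^ 2 - 1))]

noncomputable def K₁ : ℝ := (1 + Real.exp 1 ^ 2) ^ ((3:ℝ)/2) / (Real.sqrt 2 * Real.exp 1)

lemma K1_ge : (6.32 : ℝ) ≤ K₁ := by
  have he1 : (2.7182818283 : ℝ) < Real.exp 1 := Real.exp_one_gt_d9
  have he2 : Real.exp 1 < 2.7182818286 := Real.exp_one_lt_d9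
  have hx : (0:ℝ) < 1 + Real.exp 1 ^ 2 := by positivity
  have hrw : (1 + Real.exp 1 ^ 2) ^ ((3:ℝ)/2)
      = (1 + Real.exp 1 ^ 2) * Real.sqrt (1 + Real.exp 1 ^ 2) := by
    rw [show ((3:ℝ)/2) = 1 + 1/2 by norm_num, Real.rpow_add hx, Real.rpow_one,
      Real.sqrt_eq_rpow]
  have hs1 : (2.8963 : ℝ) ≤ Real.sqrt (1 + Real.exp 1 ^ 2) := by
    nlinarith [Real.sq_sqrt hx.le, Real.sqrt_nonneg (1 + Real.exp 1 ^ 2)]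
  have hs2 : Real.sqrt 2 ≤ 1.4142136 := by
    nlinarith [Real.sq_sqrt (show (0:ℝ) ≤ 2 by norm_num), Real.sqrt_nonneg 2]
  have hs2' : (0:ℝ) < Real.sqrt 2 := by positivity
  unfold K₁
  rw [hrw, le_div_iff₀ (by positivity)]
  nlinarith [Real.sqrt_nonneg (1 + Real.exp 1 ^ 2)]

lemma sqrt3_le : Real.sqrt 3 ≤ 1.7321 := by
  nlinarith [Real.sq_sqrt (show (0:ℝ) ≤ 3 by norm_num), Real.sqrt_nonneg 3]

lemma omega0_ge : (1:ℝ) ≤ ω₀ := by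
  have hbdd : BddAbove ((fun θ : ℝ => ‖bean (Complex.exp (θ * Complex.I))‖) ''
      Set.Ico 0 (2 * Real.pi)) := by
    refine ⟨Real.sqrt 3, ?_⟩
    rintro x ⟨θ, -, rfl⟩
    refine abs_bean_le ?_
    rw [Complex.exp_ofReal_mul_I_im]
    exact abs_le.mpr ⟨Real.neg_one_le_sin θ, Real.sin_le_one θ⟩
  have hmem : ‖bean (Complex.exp ((0:ℝ) * Complex.I))‖
      ∈ ((fun θ : ℝ => ‖bean (Complex.exp (θ * Complex.I))‖) ''
      Set.Ico 0 (2 * Real.pi)) :=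
    Set.mem_image_of_mem _ ⟨le_refl 0, Real.two_pi_pos⟩
  have h1 : (1:ℝ) ≤ ‖bean (Complex.exp ((0:ℝ) * Complex.I))‖ := by
    have : Complex.exp ((0:ℝ) * Complex.I) = 1 := by simp
    rw [this]
    unfold bean
    rw [abs_cpow_half]
    have htanh : (1:ℂ) + Complex.tanh 1 = ((1 + Real.tanh 1 : ℝ) : ℂ) := by
      push_cast [← Complex.ofReal_tanh]
      norm_num
    rw [htanh, Complex.norm_real, Real.norm_eq_abs]
    have ht : (0:ℝ) ≤ Real.tanh 1 := by
      rw [Real.tanh_eq_sinh_div_cosh]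
      positivity
    rw [abs_of_pos (by linarith)]
    exact Real.one_le_rpow (by linarith) (by norm_num)
  calc (1:ℝ) ≤ _ := h1
    _ ≤ ω₀ := le_csSup hbdd hmem

lemma key_bound (n : ℕ) (hn : 0 < n) (β : ℂ) (hβn : (2.5205:ℝ) * 6.32 ^ n ≤ ‖β‖)
    (p : ℂ → ℂ) (hp : DifferentiableOn ℂ p unitDisk) (hp0 : p 0 = 1) (δ : ℕ)
    (hδ : δ = 0 ∨ δ = 1)
    (hbound : ∀ z ∈ unitDisk, ‖β‖ * ‖z * deriv p z‖ ^ n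
      ≤ Real.sqrt 3 + ‖p z‖ ^ δ) :
    ∀ z₀ ∈ unitDisk, ‖p z₀ - 1‖ ≤ 1/4 := by
  intro z₀ hz₀
  have hz₀1 : ‖z₀‖ < 1 := by
    simpa [unitDisk, Metric.mem_ball, Complex.dist_eq] using hz₀
  set r : ℝ := (1 + ‖z₀‖) / 2 with hrdef
  have habs0 : 0 ≤ ‖z₀‖ := norm_nonneg _
  have hr0 : 0 < r := by positivity
  have hzr : ‖z₀‖ ≤ r := by rw [hrdef]; linarith
  have hr1 : r < 1 := by rw [hrdef]; linarith
  have hsubset : Metric.closedBall (0:ℂ) r ⊆ unitDisk := by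
    intro x hx
    rw [Metric.mem_closedBall, Complex.dist_eq, sub_zero] at hx
    simp only [unitDisk, Metric.mem_ball, Complex.dist_eq, sub_zero]
    linarith
  set q : ℂ → ℂ := fun z => z * deriv p z with hqdef
  have hpa : AnalyticOnNhd ℂ p unitDisk := hp.analyticOnNhd isOpen_unitDisk
  have hdp : DifferentiableOn ℂ (deriv p) unitDisk := (hpa.deriv).differentiableOn
  have hq : DifferentiableOn ℂ q unitDisk := differentiableOn_id.mul hdp
  have hqc : ContinuousOn q (Metric.closedBall 0 r) := (hq.continuousOn).mono hsubset
  have h0mem : (0:ℂ) ∈ Metric.closedBall (0:ℂ) r := by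
    simp [Metric.mem_closedBall, hr0.le]
  obtain ⟨zs, hzs, hmax⟩ := (isCompact_closedBall (0:ℂ) r).exists_isMaxOn
      ⟨0, h0mem⟩ (continuous_norm.comp_continuousOn hqc)
  set S := ‖q zs‖ with hSdef
  have hS0 : 0 ≤ S := norm_nonneg _
  have hmax' : ∀ x ∈ Metric.closedBall (0:ℂ) r, ‖q x‖ ≤ S := fun x hx => hmax hx
  have hq0 : q 0 = 0 := by simp [hqdef]
  -- mean value bound
  have hmvt : ∀ y ∈ Metric.closedBall (0:ℂ) r, ‖p y - 1‖ ≤ S / r * ‖y‖ := by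
    intro y hy
    have hεbound : ∀ ε : ℝ, 0 < ε →
        ‖p y - 1‖ ≤ (S + ε) / r * ‖y‖ := by
      intro ε hε
      have hball : Metric.ball (0:ℂ) r ⊆ unitDisk :=
        (Metric.ball_subset_closedBall).trans hsubset
      have hqball : DifferentiableOn ℂ q (Metric.ball 0 r) := hq.mono hball
      have hmaps : Set.MapsTo q (Metric.ball (0:ℂ) r) (Metric.ball (q 0) (S + ε)) := by
        intro x hx
        rw [hq0, Metric.mem_ball, Complex.dist_eq, sub_zero]
        exact lt_of_le_of_lt (hmax' x (Metric.ball_subset_closedBall hx)) (by linarith)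
      have hschwarz : ∀ x ∈ Metric.ball (0:ℂ) r,
          ‖q x‖ ≤ (S + ε) / r * ‖x‖ := by
        intro x hx
        have := Complex.dist_le_div_mul_dist_of_mapsTo_ball hqball (hmaps.mono_right Metric.ball_subset_closedBall) hx
        simpa [hq0, Complex.dist_eq, sub_zero] using this
      have hderiv : ∀ x ∈ Metric.closedBall (0:ℂ) r,
          ‖deriv p x‖ ≤ (S + ε) / r := by
        intro x hx
        rcases eq_or_ne x 0 with rfl | hx0
        · have hcont : ContinuousAt (deriv p) 0 :=
            (hdp.differentiableAt (isOpen_unitDisk.mem_nhds (hsubset h0mem))).continuousAt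
          have htend : Filter.Tendsto (fun x => ‖deriv p x‖)
              (nhdsWithin 0 {(0:ℂ)}ᶜ) (nhds (‖deriv p 0‖)) :=
            (continuous_norm.continuousAt.comp hcont).tendsto.mono_left
              nhdsWithin_le_nhds
          refine le_of_tendsto htend ?_
          filter_upwards [self_mem_nhdsWithin,
            mem_nhdsWithin_of_mem_nhds (Metric.ball_mem_nhds (0:ℂ) hr0)] with x hx1 hx2
          have hxa : 0 < ‖x‖ := by
            simpa [norm_pos_iff] using hx1
          have hthis := hschwarz x hx2
          rw [hqdef] at hthis
          simp only [norm_mul] at hthis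
          have : ‖deriv p x‖ * ‖x‖ ≤ (S + ε) / r * ‖x‖ := by
            rw [mul_comm]; exact hthis
          exact (mul_le_mul_iff_of_pos_right hxa).mp this
        · have hxr : ‖x‖ ≤ r := by
            rw [Metric.mem_closedBall, Complex.dist_eq, sub_zero] at hx
            exact hx
          have hxa : 0 < ‖x‖ := norm_pos_iff.mpr hx0
          have hqx : ‖q x‖ = ‖x‖ * ‖deriv p x‖ := by
            rw [hqdef]; simp [norm_mul]
          rcases lt_or_eq_of_le hxr with hlt | heq
          · have hthis := hschwarz x (by rw [Metric.mem_ball, Complex.dist_eq, sub_zero]; exact hlt)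
            rw [hqx] at hthis
            have : ‖deriv p x‖ * ‖x‖ ≤ (S + ε) / r * ‖x‖ := by
              rw [mul_comm]; exact hthis
            exact (mul_le_mul_iff_of_pos_right hxa).mp this
          · have hqle := hmax' x hx
            rw [hqx] at hqle
            have h5 : ‖deriv p x‖ * ‖x‖ ≤ S := by
              rw [mul_comm]; exact hqle
            have h6 : ‖deriv p x‖ ≤ S / ‖x‖ := by
              rw [le_div_iff₀ hxa]; exact h5
            have h7 : S / ‖x‖ = S / r := by rw [heq]
            have h8 : S / r ≤ (S + ε) / r := by gcongr <;> linarith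
            linarith [h6, h7 ▸ h6]
      have hmvt0 := Convex.norm_image_sub_le_of_norm_deriv_le (f := p)
        (fun x hx => hp.differentiableAt (isOpen_unitDisk.mem_nhds (hsubset hx)))
        hderiv (convex_closedBall _ _) h0mem hy
      rw [hp0] at hmvt0
      simpa using hmvt0
    have hya : ‖y‖ ≤ r := by
      rw [Metric.mem_closedBall, Complex.dist_eq, sub_zero] at hy; exact hy
    refine le_of_forall_pos_le_add ?_
    intro ε hε
    have := hεbound ε hε
    have h2 : (S + ε) / r * ‖y‖ = S / r * ‖y‖ + ε * (‖y‖ / r) := by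
      field_simp
    have h3 : ε * (‖y‖ / r) ≤ ε := by
      have : ‖y‖ / r ≤ 1 := by
        rw [div_le_one hr0]; exact hya
      nlinarith
    linarith
  -- now use the max point zs
  have hzs1 : zs ∈ unitDisk := hsubset hzs
  have hzsr : ‖zs‖ ≤ r := by
    rw [Metric.mem_closedBall, Complex.dist_eq, sub_zero] at hzs; exact hzs
  have hSr : S / r * ‖zs‖ ≤ S := by
    rw [div_mul_eq_mul_div, div_le_iff₀ hr0]
    exact mul_le_mul_of_nonneg_left hzsr hS0
  have hps : ‖p zs‖ ≤ 1 + S := by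
    have h1 := hmvt zs hzs
    calc ‖p zs‖ = ‖(p zs - 1) + 1‖ := by ring_nf
      _ ≤ ‖p zs - 1‖ + ‖1‖ := norm_add_le _ _
      _ ≤ S + 1 := by
          simp only [norm_one]
          linarith
      _ = 1 + S := by ring
  have hineq := hbound zs hzs1
  rw [show zs * deriv p zs = q zs from rfl, ← hSdef] at hineq
  have hpδ : ‖p zs‖ ^ δ ≤ 1 + S := by
    rcases hδ with rfl | rfl
    · rw [pow_zero]; linarith
    · rw [pow_one]; exact hps
  have hkey2 : ‖β‖ * S ^ n ≤ Real.sqrt 3 + 1 + S := by linarith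
  have hs3 := sqrt3_le
  have hs30 := Real.sqrt_nonneg 3
  have hβ0 : (0:ℝ) ≤ ‖β‖ := norm_nonneg β
  have h632 : (6.32:ℝ) ≤ 6.32 ^ n := le_self_pow₀ (by norm_num) hn.ne'
  have hS14 : S ≤ 1/4 := by
    by_contra hcon
    push_neg at hcon
    rcases le_or_gt S 1 with hSle | hSgt
    · have hpow : ((6.32:ℝ)/4) ^ n ≤ 6.32 ^ n * S ^ n := by
        rw [← mul_pow]
        exact pow_le_pow_left₀ (by norm_num) (by nlinarith) n
      have h158 : (1.58:ℝ) ≤ ((6.32:ℝ)/4) ^ n := by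
        calc (1.58:ℝ) = 6.32/4 := by norm_num
          _ ≤ ((6.32:ℝ)/4) ^ n := le_self_pow₀ (by norm_num) hn.ne'
      have hbig : (3.98:ℝ) ≤ ‖β‖ * S ^ n := by
        have h1 : (3.98:ℝ) ≤ 2.5205 * (6.32 ^ n * S ^ n) := by nlinarith
        have h2 : (2.5205:ℝ) * (6.32 ^ n * S ^ n) ≤ ‖β‖ * S ^ n := by
          rw [← mul_assoc]
          exact mul_le_mul_of_nonneg_right hβn (pow_nonneg hS0 n)
        linarith
      linarith
    · have hSn : S ≤ S ^ n := le_self_pow₀ hSgt.le hn.ne'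
      have hβ15 : (15.9:ℝ) ≤ ‖β‖ := by
        calc (15.9:ℝ) ≤ 2.5205 * 6.32 := by norm_num
          _ ≤ 2.5205 * 6.32 ^ n := by linarith
          _ ≤ ‖β‖ := hβn
      have h1 : ‖β‖ * S ≤ ‖β‖ * S ^ n :=
        mul_le_mul_of_nonneg_left hSn hβ0
      nlinarith
  have h1 := hmvt z₀ (by rw [Metric.mem_closedBall, Complex.dist_eq, sub_zero]; exact hzr)
  have h2 : S / r * ‖z₀‖ ≤ S := by
    rw [div_mul_eq_mul_div, div_le_iff₀ hr0]
    exact mul_le_mul_of_nonneg_left hzr hS0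
  linarith

lemma construct (p : ℂ → ℂ) (hp : DifferentiableOn ℂ p unitDisk) (hp0 : p 0 = 1)
    (hkey : ∀ z ∈ unitDisk, ‖p z - 1‖ ≤ 1/4) : Subord p bean := by
  have h0mem : (0:ℂ) ∈ unitDisk := by simp [unitDisk]
  have ha : ∀ z ∈ unitDisk, ‖p z ^ 2 - 1‖ ≤ 9/16 := by
    intro z hz
    have h1 : p z ^ 2 - 1 = (p z - 1) * (p z + 1) := by ring
    rw [h1, norm_mul]
    have h2 : ‖p z + 1‖ ≤ 9/4 := by
      calc ‖p z + 1‖ = ‖(p z - 1) + 2‖ := by ring_nf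
        _ ≤ ‖p z - 1‖ + ‖2‖ := norm_add_le _ _
        _ ≤ 1/4 + 2 := by
            have := hkey z hz
            simp only [Complex.norm_two]
            linarith
        _ = 9/4 := by norm_num
    have := hkey z hz
    calc ‖p z - 1‖ * ‖p z + 1‖ ≤ (1/4) * (9/4) :=
        mul_le_mul this h2 (norm_nonneg _) (by norm_num)
      _ = 9/16 := by norm_num
  have hre : ∀ z ∈ unitDisk, 7/16 ≤ (p z ^ 2).re ∧ (p z ^ 2).re ≤ 25/16 := by
    intro z hz
    have h1 := ha z hz
    have h2 : |(p z ^ 2 - 1).re| ≤ 9/16 := le_trans (Complex.abs_re_le_norm _) h1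
    have h3 : (p z ^ 2 - 1).re = (p z ^ 2).re - 1 := by simp
    rw [h3] at h2
    have := abs_le.mp h2
    constructor <;> linarith [this.1, this.2]
  have hslit1 : ∀ z ∈ unitDisk, p z ^ 2 ∈ Complex.slitPlane := by
    intro z hz
    exact Or.inl (by linarith [(hre z hz).1])
  have hslit2 : ∀ z ∈ unitDisk, 2 - p z ^ 2 ∈ Complex.slitPlane := by
    intro z hz
    have h1 : (2 - p z ^ 2).re = 2 - (p z ^ 2).re := by simp
    exact Or.inl (by rw [h1]; linarith [(hre z hz).2])
  have hne1 : ∀ z ∈ unitDisk, p z ^ 2 ≠ 0 := by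
    intro z hz h
    have := (hre z hz).1
    rw [h] at this
    simp at this
    linarith
  have hne2 : ∀ z ∈ unitDisk, (2:ℂ) - p z ^ 2 ≠ 0 := by
    intro z hz h
    have h2 := (hre z hz).2
    have h3 : p z ^ 2 = 2 := (sub_eq_zero.mp h).symm
    rw [h3] at h2
    norm_num at h2
  set w : ℂ → ℂ := fun z => (Complex.log (p z ^ 2) - Complex.log (2 - p z ^ 2)) / 2 with hwdef
  refine ⟨w, ?_, ?_, ?_, ?_⟩
  · -- differentiability
    apply DifferentiableOn.div_const
    exact ((hp.pow 2).clog hslit1).sub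
      ((differentiableOn_const 2 |>.sub (hp.pow 2)).clog hslit2)
  · rw [hwdef]
    simp only [hp0, one_pow]
    rw [show (2:ℂ) - 1 = 1 by norm_num]
    simp
  · -- |w z| < 1
    intro z hz
    set a : ℂ := p z ^ 2 - 1 with hadef
    have hanorm : ‖a‖ ≤ 9/16 := by
      rw [hadef]; exact_mod_cast ha z hz
    have hanorm1 : ‖a‖ < 1 := lt_of_le_of_lt hanorm (by norm_num)
    have hnegnorm : ‖-a‖ < 1 := by rwa [norm_neg]
    have h1 : ‖Complex.log (1 + a) - a‖ ≤ ‖a‖ ^ 2 * (1 - ‖a‖)⁻¹ / 2 :=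
      Complex.norm_log_one_add_sub_self_le hanorm1
    have h2 : ‖Complex.log (1 + -a) - -a‖ ≤ ‖-a‖ ^ 2 * (1 - ‖-a‖)⁻¹ / 2 :=
      Complex.norm_log_one_add_sub_self_le hnegnorm
    rw [norm_neg] at h2
    have hbnd : ‖a‖ ^ 2 * (1 - ‖a‖)⁻¹ / 2 ≤ 81/224 := by
      have ht0 : (0:ℝ) ≤ ‖a‖ := norm_nonneg a
      have hinv : (1 - ‖a‖)⁻¹ ≤ (1 - 9/16 : ℝ)⁻¹ := by
        apply inv_anti₀ <;> linarith
      have : ‖a‖ ^ 2 * (1 - ‖a‖)⁻¹ ≤ (9/16)^2 * (7/16 : ℝ)⁻¹ := by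
        apply mul_le_mul (by nlinarith) ?_ (by rw [inv_nonneg]; linarith) (by positivity)
        exact le_of_le_of_eq hinv (by norm_num)
      nlinarith
    have hw : w z = ((Complex.log (1 + a) - a) - (Complex.log (1 + -a) - -a) + 2*a) / 2 := by
      rw [hwdef, hadef]
      have e1 : (1:ℂ) + (p z ^ 2 - 1) = p z ^ 2 := by ring
      have e2 : (1:ℂ) + -(p z ^ 2 - 1) = 2 - p z ^ 2 := by ring
      rw [e1, e2]
      ring
    rw [hw]
    have hcalc : ‖((Complex.log (1 + a) - a) - (Complex.log (1 + -a) - -a) + 2*a)‖ 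
        ≤ 81/224 + 81/224 + 2 * (9/16) := by
      calc ‖((Complex.log (1 + a) - a) - (Complex.log (1 + -a) - -a) + 2*a)‖
          ≤ ‖(Complex.log (1 + a) - a) - (Complex.log (1 + -a) - -a)‖
            + ‖2*a‖ := norm_add_le _ _
        _ ≤ ‖Complex.log (1 + a) - a‖ + ‖Complex.log (1 + -a) - -a‖
            + ‖2*a‖ := by linarith [norm_sub_le (Complex.log (1 + a) - a) (Complex.log (1 + -a) - -a)]
        _ ≤ 81/224 + 81/224 + 2 * (9/16) := by
            have e3 : ‖2*a‖ = 2 * ‖a‖ := by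
              rw [norm_mul, Complex.norm_two]
            have hn1 : ‖Complex.log (1 + a) - a‖ ≤ 81/224 := by
              have : ‖Complex.log (1 + a) - a‖ ≤ 81/224 := le_trans h1 hbnd
              exact_mod_cast this
            have hn2 : ‖Complex.log (1 + -a) - -a‖ ≤ 81/224 := by
              have hbnd2 : ‖a‖ ^ 2 * (1 - ‖a‖)⁻¹ / 2 ≤ 81/224 := hbnd
              have : ‖Complex.log (1 + -a) - -a‖ ≤ 81/224 := le_trans h2 hbnd
              exact_mod_cast this
            have hn3 : ‖a‖ ≤ 9/16 := by exact_mod_cast hanorm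
            rw [e3]
            linarith
    rw [norm_div, Complex.norm_two]
    calc ‖((Complex.log (1 + a) - a) - (Complex.log (1 + -a) - -a) + 2*a)‖ / 2
        ≤ (81/224 + 81/224 + 2 * (9/16)) / 2 := by linarith
      _ < 1 := by norm_num
  · -- the equation
    intro z hz
    have hpne := hne1 z hz
    have h2ne := hne2 z hz
    have hexp2w : Complex.exp (2 * w z) = p z ^ 2 / (2 - p z ^ 2) := by
      have e1 : 2 * w z = Complex.log (p z ^ 2) - Complex.log (2 - p z ^ 2) := by
        rw [hwdef]; ring
      rw [e1, Complex.exp_sub, Complex.exp_log hpne, Complex.exp_log h2ne]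
    have hden : Complex.exp (2 * w z) + 1 ≠ 0 := by
      rw [hexp2w]
      intro h
      have h3 : (p z ^ 2 / (2 - p z ^ 2) + 1) * (2 - p z ^ 2) = 0 := by rw [h, zero_mul]
      rw [add_mul, div_mul_cancel₀ _ h2ne, one_mul] at h3
      have h4 : (2:ℂ) = 0 := by linear_combination h3
      norm_num at h4
    have hE : Complex.exp (w z) ≠ 0 := Complex.exp_ne_zero _
    have hE2 : Complex.exp (w z) * Complex.exp (w z) = Complex.exp (2 * w z) := by
      rw [← Complex.exp_add]; ring_nf
    have hsinh : Complex.sinh (w z) * (2 * Complex.exp (w z))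
        = Complex.exp (2 * w z) - 1 := by
      rw [Complex.sinh]
      have hone : Complex.exp (-w z) * Complex.exp (w z) = 1 := by
        rw [← Complex.exp_add]; simp
      linear_combination hE2 - hone
    have hcosh : Complex.cosh (w z) * (2 * Complex.exp (w z))
        = Complex.exp (2 * w z) + 1 := by
      rw [Complex.cosh]
      have hone : Complex.exp (-w z) * Complex.exp (w z) = 1 := by
        rw [← Complex.exp_add]; simp
      linear_combination hE2 + hone
    have hcoshne : Complex.cosh (w z) ≠ 0 := by
      intro h
      rw [h, zero_mul] at hcosh
      exact hden hcosh.symm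
    have htanh : Complex.tanh (w z) = p z ^ 2 - 1 := by
      have hkey2 : Complex.sinh (w z) * (2 * Complex.exp (w z))
          = (p z ^ 2 - 1) * (Complex.cosh (w z) * (2 * Complex.exp (w z))) := by
        rw [hsinh, hcosh, hexp2w]
        field_simp
        ring
      have hcancel : Complex.sinh (w z) = (p z ^ 2 - 1) * Complex.cosh (w z) := by
        have h2E : (2 : ℂ) * Complex.exp (w z) ≠ 0 := by
          simp [hE]
        refine mul_right_cancel₀ h2E ?_
        linear_combination hkey2
      rw [Complex.tanh_eq_sinh_div_cosh, hcancel, mul_div_assoc, div_self hcoshne, mul_one]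
    -- now bean (w z) = (p z^2)^(1/2) = p z
    have hbean : bean (w z) = (p z ^ 2) ^ ((1:ℂ)/2) := by
      unfold bean
      rw [htanh]
      norm_num
    have hu : (p z ^ 2 : ℂ) ^ ((1:ℂ)/2) = p z := by
      set u : ℂ := (p z ^ 2) ^ ((1:ℂ)/2) with hudef
      have hinv : ((1:ℂ)/2) = (((2:ℕ)):ℂ)⁻¹ := by norm_num
      have hu2 : u ^ (2:ℕ) = p z ^ 2 := by
        rw [hudef, hinv]
        exact Complex.cpow_nat_inv_pow _ two_ne_zero
      have hfact : (u - p z) * (u + p z) = 0 := by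
        have : u^2 - p z ^2 = 0 := by rw [← hu2]; ring
        linear_combination this
      have hure : 0 < u.re := by
        rw [hudef, Complex.cpow_def_of_ne_zero hpne]
        rw [Complex.exp_re]
        have harg : |Complex.arg (p z ^ 2)| < Real.pi / 2 :=
          Complex.abs_arg_lt_pi_div_two_iff.mpr (Or.inl (by linarith [(hre z hz).1]))
        have him : (Complex.log (p z ^ 2) * ((1:ℂ)/2)).im = Complex.arg (p z ^ 2) / 2 := by
          rw [Complex.mul_im, Complex.log_im]
          norm_num
          ring
        rw [him]
        have hcos : 0 < Real.cos (Complex.arg (p z ^ 2) / 2) := by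
          apply Real.cos_pos_of_mem_Ioo
          constructor
          · rcases abs_lt.mp harg with ⟨h1, h2⟩
            linarith
          · rcases abs_lt.mp harg with ⟨h1, h2⟩
            linarith
        positivity
      have hpre : 0 < (p z).re := by
        have h2 : |(p z - 1).re| ≤ 1/4 := le_trans (Complex.abs_re_le_norm _) (hkey z hz)
        have h3 : (p z - 1).re = (p z).re - 1 := by simp
        rw [h3] at h2
        linarith [(abs_le.mp h2).1]
      rcases mul_eq_zero.mp hfact with h | h
      · exact sub_eq_zero.mp h
      · exfalso
        have : u = -p z := by linear_combination h
        rw [this] at hure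
        simp only [Complex.neg_re] at hure
        linarith
    rw [hbean, hu]


theorem stmt_3 (n : ℕ) (hn : 0 < n) (δ : ℕ) (hδ : δ = 0 ∨ δ = 1) (β : ℂ)
    (hβ : (R₀ + ω₀ ^ δ) * (1 + Real.exp 1 ^ 2) ^ ((3 * (n : ℝ)) / 2) /
        (Real.sqrt 2 * Real.exp 1) ^ n ≤ ‖β‖)
    (p : ℂ → ℂ) (hp : DifferentiableOn ℂ p unitDisk) (hp0 : p 0 = 1)
    (hsub : Subord (fun z => p z ^ δ + β * (z * deriv p z) ^ n) bean) :
    Subord p bean := by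
  -- rewrite the coefficient bound
  have hx : (0:ℝ) < 1 + Real.exp 1 ^ 2 := by positivity
  have hrpow : (1 + Real.exp 1 ^ 2) ^ ((3 * (n : ℝ)) / 2)
      = ((1 + Real.exp 1 ^ 2) ^ ((3:ℝ)/2)) ^ n := by
    rw [← Real.rpow_natCast ((1 + Real.exp 1 ^ 2) ^ ((3:ℝ)/2)) n, ← Real.rpow_mul hx.le]
    norm_num
    ring_nf
  have hKrw : (R₀ + ω₀ ^ δ) * (1 + Real.exp 1 ^ 2) ^ ((3 * (n : ℝ)) / 2) /
      (Real.sqrt 2 * Real.exp 1) ^ n = (R₀ + ω₀ ^ δ) * K₁ ^ n := by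
    rw [hrpow]
    unfold K₁
    rw [div_pow]
    ring
  rw [hKrw] at hβ
  have hC : (2.5205:ℝ) ≤ R₀ + ω₀ ^ δ := by
    rcases hδ with rfl | rfl
    · rw [pow_zero]; linarith [R0_ge]
    · rw [pow_one]; linarith [R0_ge, omega0_ge]
  have hβn : (2.5205:ℝ) * 6.32 ^ n ≤ ‖β‖ := by
    have h1 : ((6.32:ℝ)) ^ n ≤ K₁ ^ n := pow_le_pow_left₀ (by norm_num) K1_ge n
    have h2 : (2.5205:ℝ) * 6.32 ^ n ≤ (R₀ + ω₀ ^ δ) * K₁ ^ n := by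
      apply mul_le_mul hC h1 (by positivity) (by linarith)
    linarith
  -- the subordination bound
  obtain ⟨ω, hω1, hω2, hω3, hω4⟩ := hsub
  have hbound : ∀ z ∈ unitDisk, ‖β‖ * ‖z * deriv p z‖ ^ n
      ≤ Real.sqrt 3 + ‖p z‖ ^ δ := by
    intro z hz
    have heq : p z ^ δ + β * (z * deriv p z) ^ n = bean (ω z) := hω4 z hz
    have heq2 : β * (z * deriv p z) ^ n = bean (ω z) - p z ^ δ := by
      linear_combination heq
    have hbeanle : ‖bean (ω z)‖ ≤ Real.sqrt 3 := by
      apply abs_bean_le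
      calc |(ω z).im| ≤ ‖ω z‖ := Complex.abs_im_le_norm _
        _ ≤ 1 := (hω3 z hz).le
    calc ‖β‖ * ‖z * deriv p z‖ ^ n
        = ‖β * (z * deriv p z) ^ n‖ := by simp [norm_mul, norm_pow]
      _ = ‖bean (ω z) - p z ^ δ‖ := by rw [heq2]
      _ ≤ ‖bean (ω z)‖ + ‖p z ^ δ‖ :=
          norm_sub_le _ _
      _ ≤ Real.sqrt 3 + ‖p z‖ ^ δ := by
          rw [norm_pow]
          linarith
  have hkey := key_bound n hn β hβn p hp hp0 δ hδ hbound
  exact construct p hp hp0 hkey
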